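/- For every positive integer p, all natural numbers n and k with 0 ≤ k ≤ n, and every real number x, the higher-order Euler polynomials satisfy Σ_{j=0}^{n-k} C(n-k, j) (-1)^j E_{j+k}^{(p)}(x) = (-1)^{n+k+1} Σ_{j=0}^{k} C(k, j) E_{n-j}^{(p)}(x) + 2 (-1)^{n+k} Σ_{j=0}^{k} C(k, j) E_{n-j}^{(p-1)}(x - 1). -/

import Mathlib

open PowerSeries Finset

private lemma pascal_sum16 (f : ℕ → ℝ) (m : ℕ) :
    ∑ j ∈ Finset.range (m + 1 + 1), ((m + 1).choose j : ℝ) * f j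
      = ∑ j ∈ Finset.range (m + 1), (m.choose j : ℝ) * f j
        + ∑ j ∈ Finset.range (m + 1), (m.choose j : ℝ) * f (j + 1) := by
  rw [Finset.sum_range_succ' _ (m + 1)]
  have h1 : ∀ j ∈ Finset.range (m + 1), ((m + 1).choose (j + 1) : ℝ) * f (j + 1)
      = (m.choose j : ℝ) * f (j + 1) + (m.choose (j + 1) : ℝ) * f (j + 1) := by
    intro j _
    rw [Nat.choose_succ_succ]
    push_cast
    ring
  rw [Finset.sum_congr rfl h1, Finset.sum_add_distrib]
  rw [Finset.sum_range_succ (fun j => ((m).choose (j + 1) : ℝ) * f (j + 1)) m]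
  rw [Finset.sum_range_succ' (fun j => ((m).choose j : ℝ) * f j) m]
  simp [Nat.choose_succ_self]
  ring

theorem statement_16 (p : ℕ) (hp : 0 < p) (n k : ℕ) (hkn : k ≤ n) (x : ℝ)
    (E : ℕ → ℝ → ℕ → ℝ)
    (hE : ∀ (q : ℕ) (y : ℝ), (PowerSeries.mk fun m => E q y m / (m.factorial : ℝ)) *
        (PowerSeries.exp ℝ + 1) ^ q =
      (2 : PowerSeries ℝ) ^ q * PowerSeries.rescale y (PowerSeries.exp ℝ)) :
    ∑ j ∈ Finset.range (n - k + 1), ((n - k).choose j : ℝ) * (-1) ^ j * E p x (j + k) =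
      (-1 : ℝ) ^ (n + k + 1) *
          (∑ j ∈ Finset.range (k + 1), (k.choose j : ℝ) * E p x (n - j)) +
        2 * (-1 : ℝ) ^ (n + k) *
          (∑ j ∈ Finset.range (k + 1), (k.choose j : ℝ) * E (p - 1) (x - 1) (n - j)) := by
  -- Abbreviation for the generating power series.
  set F : ℕ → ℝ → PowerSeries ℝ :=
    fun q y => PowerSeries.mk fun m => E q y m / (m.factorial : ℝ) with hF
  have hne : (PowerSeries.exp ℝ + 1) ≠ 0 := by
    intro h
    have h2 := congrArg (PowerSeries.constantCoeff (R := ℝ)) h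
    simp at h2
  -- Shift identity : F p x = F p (x-1) * exp
  have hshift : F p x = F p (x - 1) * PowerSeries.exp ℝ := by
    apply mul_right_cancel₀ (pow_ne_zero p hne)
    rw [hE p x]
    symm
    have hr : PowerSeries.rescale (x - 1) (PowerSeries.exp ℝ) * PowerSeries.exp ℝ
        = PowerSeries.rescale x (PowerSeries.exp ℝ) := by
      have h3 := PowerSeries.exp_mul_exp_eq_exp_add (A := ℝ) (x - 1) 1
      simpa [PowerSeries.rescale_one] using h3
    calc F p (x - 1) * PowerSeries.exp ℝ * (PowerSeries.exp ℝ + 1) ^ p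
        = F p (x - 1) * (PowerSeries.exp ℝ + 1) ^ p * PowerSeries.exp ℝ := by ring
      _ = (2 : PowerSeries ℝ) ^ p * PowerSeries.rescale (x - 1) (PowerSeries.exp ℝ)
            * PowerSeries.exp ℝ := by rw [hE p (x - 1)]
      _ = (2 : PowerSeries ℝ) ^ p * PowerSeries.rescale x (PowerSeries.exp ℝ) := by
          rw [mul_assoc, hr]
  -- Reflection identity : F p (x-1) = F p x * rescale (-1) exp
  have hrefl : F p (x - 1) = F p x * PowerSeries.rescale (-1) (PowerSeries.exp ℝ) := by
    apply mul_right_cancel₀ (pow_ne_zero p hne)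
    rw [hE p (x - 1)]
    symm
    have hr : PowerSeries.rescale x (PowerSeries.exp ℝ)
          * PowerSeries.rescale (-1) (PowerSeries.exp ℝ)
        = PowerSeries.rescale (x - 1) (PowerSeries.exp ℝ) := by
      have h3 := PowerSeries.exp_mul_exp_eq_exp_add (A := ℝ) x (-1)
      simpa [sub_eq_add_neg] using h3
    calc F p x * PowerSeries.rescale (-1) (PowerSeries.exp ℝ) * (PowerSeries.exp ℝ + 1) ^ p
        = F p x * (PowerSeries.exp ℝ + 1) ^ p
            * PowerSeries.rescale (-1) (PowerSeries.exp ℝ) := by ring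
      _ = (2 : PowerSeries ℝ) ^ p * PowerSeries.rescale x (PowerSeries.exp ℝ)
            * PowerSeries.rescale (-1) (PowerSeries.exp ℝ) := by rw [hE p x]
      _ = (2 : PowerSeries ℝ) ^ p * PowerSeries.rescale (x - 1) (PowerSeries.exp ℝ) := by
          rw [mul_assoc, hr]
  -- Recurrence in the order : F p x + F p (x-1) = 2 * F (p-1) (x-1)
  have hrec : F p x + F p (x - 1) = 2 * F (p - 1) (x - 1) := by
    obtain ⟨q, rfl⟩ : ∃ q, p = q + 1 := ⟨p - 1, (Nat.succ_pred_eq_of_pos hp).symm⟩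
    have hq : q + 1 - 1 = q := rfl
    rw [hq]
    apply mul_right_cancel₀ (pow_ne_zero q hne)
    have h1 := hE (q + 1) (x - 1)
    have h2 := hE q (x - 1)
    rw [hshift]
    calc (F (q + 1) (x - 1) * PowerSeries.exp ℝ + F (q + 1) (x - 1))
            * (PowerSeries.exp ℝ + 1) ^ q
        = F (q + 1) (x - 1) * (PowerSeries.exp ℝ + 1) ^ (q + 1) := by ring
      _ = (2 : PowerSeries ℝ) ^ (q + 1) * PowerSeries.rescale (x - 1) (PowerSeries.exp ℝ) := h1
      _ = 2 * ((2 : PowerSeries ℝ) ^ q * PowerSeries.rescale (x - 1) (PowerSeries.exp ℝ)) := by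
          ring
      _ = 2 * (F q (x - 1) * (PowerSeries.exp ℝ + 1) ^ q) := by rw [h2]
      _ = 2 * F q (x - 1) * (PowerSeries.exp ℝ + 1) ^ q := by ring
  -- coefficient versions
  have hrec_n : ∀ m : ℕ, E p x m + E p (x - 1) m = 2 * E (p - 1) (x - 1) m := by
    intro m
    have h1 : F p x + F p (x - 1) = F (p - 1) (x - 1) + F (p - 1) (x - 1) := by
      rw [hrec]; ring
    have h2 := congrArg (PowerSeries.coeff (R := ℝ) m) h1
    simp only [map_add, hF, PowerSeries.coeff_mk] at h2
    have hfac : ((m.factorial : ℝ)) ≠ 0 := Nat.cast_ne_zero.mpr m.factorial_ne_zero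
    field_simp at h2
    linarith
  have hrefl_n : ∀ m : ℕ,
      ∑ j ∈ Finset.range (m + 1), (m.choose j : ℝ) * ((-1) ^ j * E p x j)
        = (-1) ^ m * E p (x - 1) m := by
    intro m
    have h2 := congrArg (PowerSeries.coeff (R := ℝ) m) hrefl
    rw [PowerSeries.coeff_mul] at h2
    rw [Finset.Nat.sum_antidiagonal_eq_sum_range_succ_mk] at h2
    simp only [hF, PowerSeries.coeff_mk, PowerSeries.coeff_rescale, PowerSeries.coeff_exp,
      map_div₀, map_one, map_natCast] at h2
    have hfac : ((m.factorial : ℝ)) ≠ 0 := Nat.cast_ne_zero.mpr m.factorial_ne_zero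
    rw [div_eq_iff hfac] at h2
    rw [h2, Finset.sum_mul, Finset.mul_sum]
    apply Finset.sum_congr rfl
    intro j hj
    have hj' : j ≤ m := by
      have := Finset.mem_range.mp hj; omega
    have hc : (m.choose j : ℝ) = (m.factorial : ℝ) / ((j.factorial : ℝ) * ((m - j).factorial : ℝ)) :=
      Nat.cast_choose ℝ hj'
    have hsign : (-1 : ℝ) ^ m * (-1 : ℝ) ^ (m - j) = (-1 : ℝ) ^ j := by
      rw [← pow_add, show m + (m - j) = 2 * (m - j) + j by omega, pow_add, pow_mul]
      norm_num
    have hjf : ((j.factorial : ℝ)) ≠ 0 := Nat.cast_ne_zero.mpr j.factorial_ne_zero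
    have hmjf : (((m - j).factorial : ℝ)) ≠ 0 := Nat.cast_ne_zero.mpr (m - j).factorial_ne_zero
    rw [hc, ← hsign]
    field_simp
  -- The reformulated identity, proved by induction on k.
  have key : ∀ (k m : ℕ),
      ∑ j ∈ Finset.range (m + 1), ((m).choose j : ℝ) * ((-1) ^ j * E p x (j + k))
        = (-1 : ℝ) ^ (m + 1) * ∑ j ∈ Finset.range (k + 1), (k.choose j : ℝ) * E p x (j + m)
          + 2 * (-1 : ℝ) ^ m *
            ∑ j ∈ Finset.range (k + 1), (k.choose j : ℝ) * E (p - 1) (x - 1) (j + m) := by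
    intro k
    induction k with
    | zero =>
      intro m
      simp only [Finset.sum_range_one, Nat.choose_self, Nat.cast_one, one_mul, zero_add,
        Nat.add_zero]
      rw [hrefl_n m]
      have h2 := hrec_n m
      have h3 : E p (x - 1) m = 2 * E (p - 1) (x - 1) m - E p x m := by linarith
      rw [h3, pow_succ]
      ring
    | succ k ih =>
      intro m
      -- LHS recurrence
      have e1 : ∑ j ∈ Finset.range (m + 1), ((m).choose j : ℝ) * ((-1) ^ j * E p x (j + (k + 1)))
          = (∑ j ∈ Finset.range (m + 1), ((m).choose j : ℝ) * ((-1) ^ j * E p x (j + k)))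
            - ∑ j ∈ Finset.range (m + 1 + 1),
                ((m + 1).choose j : ℝ) * ((-1) ^ j * E p x (j + k)) := by
        have hps := pascal_sum16 (fun j => (-1 : ℝ) ^ j * E p x (j + k)) m
        have hterm : ∀ j : ℕ, (-1 : ℝ) ^ (j + 1) * E p x ((j + 1) + k)
            = -((-1 : ℝ) ^ j * E p x (j + (k + 1))) := by
          intro j
          rw [show j + 1 + k = j + (k + 1) by omega, pow_succ]
          ring
        simp only [hterm, mul_neg, Finset.sum_neg_distrib] at hps
        linarith
      -- RHS recurrences
      have e2 : ∑ j ∈ Finset.range (k + 1 + 1), ((k + 1).choose j : ℝ) * E p x (j + m)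
          = (∑ j ∈ Finset.range (k + 1), (k.choose j : ℝ) * E p x (j + m))
            + ∑ j ∈ Finset.range (k + 1), (k.choose j : ℝ) * E p x (j + (m + 1)) := by
        have hps := pascal_sum16 (fun j => E p x (j + m)) k
        have hterm : ∀ j : ℕ, E p x ((j + 1) + m) = E p x (j + (m + 1)) := by
          intro j; rw [show j + 1 + m = j + (m + 1) by omega]
        simp only [hterm] at hps
        exact hps
      have e3 : ∑ j ∈ Finset.range (k + 1 + 1), ((k + 1).choose j : ℝ) * E (p - 1) (x - 1) (j + m)
          = (∑ j ∈ Finset.range (k + 1), (k.choose j : ℝ) * E (p - 1) (x - 1) (j + m))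
            + ∑ j ∈ Finset.range (k + 1), (k.choose j : ℝ) * E (p - 1) (x - 1) (j + (m + 1)) := by
        have hps := pascal_sum16 (fun j => E (p - 1) (x - 1) (j + m)) k
        have hterm : ∀ j : ℕ, E (p - 1) (x - 1) ((j + 1) + m) = E (p - 1) (x - 1) (j + (m + 1)) := by
          intro j; rw [show j + 1 + m = j + (m + 1) by omega]
        simp only [hterm] at hps
        exact hps
      rw [e1, e2, e3, ih m, ih (m + 1)]
      simp only [pow_succ]
      ring
  -- Deduce the statement from `key`.
  obtain ⟨m, rfl⟩ : ∃ m, n = k + m := ⟨n - k, by omega⟩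
  have hmk : k + m - k = m := by omega
  have h1 : ∑ j ∈ Finset.range (k + 1), (k.choose j : ℝ) * E p x (k + m - j)
      = ∑ j ∈ Finset.range (k + 1), (k.choose j : ℝ) * E p x (j + m) := by
    have hr := Finset.sum_range_reflect (fun j => (k.choose j : ℝ) * E p x (k + m - j)) (k + 1)
    rw [← hr]
    apply Finset.sum_congr rfl
    intro j hj
    have hj' : j ≤ k := by have := Finset.mem_range.mp hj; omega
    rw [show k + 1 - 1 - j = k - j by omega, Nat.choose_symm hj',
      show k + m - (k - j) = j + m by omega]
  have h2 : ∑ j ∈ Finset.range (k + 1), (k.choose j : ℝ) * E (p - 1) (x - 1) (k + m - j)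
      = ∑ j ∈ Finset.range (k + 1), (k.choose j : ℝ) * E (p - 1) (x - 1) (j + m) := by
    have hr := Finset.sum_range_reflect
      (fun j => (k.choose j : ℝ) * E (p - 1) (x - 1) (k + m - j)) (k + 1)
    rw [← hr]
    apply Finset.sum_congr rfl
    intro j hj
    have hj' : j ≤ k := by have := Finset.mem_range.mp hj; omega
    rw [show k + 1 - 1 - j = k - j by omega, Nat.choose_symm hj',
      show k + m - (k - j) = j + m by omega]
  have hsgn1 : (-1 : ℝ) ^ (k + m + k + 1) = (-1 : ℝ) ^ (m + 1) := by
    rw [show k + m + k + 1 = 2 * k + (m + 1) by omega, pow_add, pow_mul]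
    norm_num
  have hsgn0 : (-1 : ℝ) ^ (k + m + k) = (-1 : ℝ) ^ m := by
    rw [show k + m + k = 2 * k + m by omega, pow_add, pow_mul]
    norm_num
  rw [hmk, h1, h2, hsgn1, hsgn0]
  have hk := key k m
  simp only [mul_assoc]
  rw [hk]
  ring
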